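/- Let f : [0,1] → ℝ be piecewise constant with respect to the uniform partition with n nodes, i.e. f = Σ_{i=1}^n f_i ζ_i with ζ_i the indicator of [i/n, (i+1)/n) (indices mod n, periodic boundary conditions). Then the total variation of f on the circle equals the sum of jump sizes: TV(f) = Σ_{i=1}^n |f_i − f_{i−1}|. -/

import Mathlib

open Finset ENNReal

/-- Reindexing a sum over `range n` as a sum over `ZMod n`. -/
lemma sum_range_zmod {n : ℕ} [NeZero n] (F : ZMod n → ℝ≥0∞) :
    ∑ j ∈ Finset.range n, F (j : ZMod n) = ∑ i : ZMod n, F i := by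
  refine Finset.sum_nbij' (fun j => (j : ZMod n)) (fun i => i.val) ?_ ?_ ?_ ?_ ?_
  · intro a _; exact Finset.mem_univ _
  · intro a _; exact Finset.mem_range.mpr (ZMod.val_lt a)
  · intro a ha; exact ZMod.val_cast_of_lt (Finset.mem_range.mp ha)
  · intro a _; exact ZMod.natCast_rightInverse a
  · intro a _; rfl

/-- Telescoping bound: the distance between endpoints is at most the sum of
consecutive jumps. -/
lemma telescope_bound {n : ℕ} [NeZero n] (c : ZMod n → ℝ) :
    ∀ b a : ℕ, a ≤ b →
      edist (c (b : ZMod n)) (c (a : ZMod n)) ≤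
        ∑ j ∈ Finset.Ico a b, edist (c ((j : ZMod n) + 1)) (c (j : ZMod n)) := by
  intro b
  induction b with
  | zero =>
    intro a ha
    obtain rfl : a = 0 := Nat.le_zero.mp ha
    simp
  | succ b ih =>
    intro a ha
    rcases Nat.lt_or_ge a (b + 1) with h | h
    · have hab : a ≤ b := Nat.lt_succ_iff.mp h
      calc edist (c ((b + 1 : ℕ) : ZMod n)) (c (a : ZMod n))
          ≤ edist (c ((b + 1 : ℕ) : ZMod n)) (c (b : ZMod n))
              + edist (c (b : ZMod n)) (c (a : ZMod n)) := edist_triangle _ _ _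
        _ ≤ edist (c ((b : ZMod n) + 1)) (c (b : ZMod n))
              + ∑ j ∈ Finset.Ico a b, edist (c ((j : ZMod n) + 1)) (c (j : ZMod n)) := by
            gcongr
            · push_cast; rfl
            · exact ih a hab
        _ = ∑ j ∈ Finset.Ico a (b + 1), edist (c ((j : ZMod n) + 1)) (c (j : ZMod n)) := by
            rw [Finset.sum_Ico_succ_top hab]; ring
    · obtain rfl : a = b + 1 := le_antisymm ha h
      simp

/-- The total variation on the circle (`[0,1]` with periodic identification) of a piecewise
constant function `f = Σᵢ fᵢ ζᵢ`, where `ζᵢ` is the indicator of `[i/n, (i+1)/n)`, equals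
the sum of the jump sizes `Σᵢ |fᵢ − fᵢ₋₁|` (indices mod `n`). -/
theorem totalVariation_piecewise_constant
    (n : ℕ) [NeZero n] (c : ZMod n → ℝ)
    (f : ℝ → ℝ) (hf : ∀ s : ℝ, f s = c ((⌊(n : ℝ) * s⌋ : ℤ) : ZMod n)) :
    eVariationOn f (Set.Icc 0 1) =
      ENNReal.ofReal (∑ i : ZMod n, |c i - c (i - 1)|) := by
  classical
  have hn0 : (n : ℝ) ≠ 0 := Nat.cast_ne_zero.mpr (NeZero.ne n)
  have hnpos : (0 : ℝ) < n := Nat.cast_pos.mpr (Nat.pos_of_ne_zero (NeZero.ne n))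
  set E : ZMod n → ℝ≥0∞ := fun i => edist (c (i + 1)) (c i) with hE
  -- the target equals ∑ i, E i
  have hT : ENNReal.ofReal (∑ i : ZMod n, |c i - c (i - 1)|) = ∑ i : ZMod n, E i := by
    rw [ENNReal.ofReal_sum_of_nonneg (fun i _ => abs_nonneg _)]
    rw [← Equiv.sum_comp (Equiv.addRight (1 : ZMod n))
      (fun i => ENNReal.ofReal |c i - c (i - 1)|)]
    refine Finset.sum_congr rfl fun i _ => ?_
    simp only [Equiv.coe_addRight, add_sub_cancel_right, hE]
    rw [edist_dist, Real.dist_eq]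
  -- value of f at points of [0,1]
  have hval : ∀ (i : ℕ) (s : ℝ), 0 ≤ s → ⌊(n : ℝ) * s⌋₊ = i → f s = c (i : ZMod n) := by
    intro i s hs hfl
    rw [hf s, ← Int.natCast_floor_eq_floor (by positivity), hfl]
    push_cast
    rfl
  rw [hT]
  refine le_antisymm ?_ ?_
  · -- upper bound
    refine iSup_le ?_
    rintro ⟨m, u, hu, us⟩
    set k : ℕ → ℕ := fun i => ⌊(n : ℝ) * u i⌋₊ with hk
    have hkmono : Monotone k := fun a b hab =>
      Nat.floor_le_floor (by have := hu hab; nlinarith)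
    have hkle : ∀ i, k i ≤ n := by
      intro i
      have h1 : (n : ℝ) * u i ≤ n := by
        have := (us i).2; nlinarith
      calc k i ≤ ⌊(n : ℝ)⌋₊ := Nat.floor_le_floor h1
        _ = n := Nat.floor_natCast n
    have hfu : ∀ i, f (u i) = c ((k i : ℕ) : ZMod n) := fun i =>
      hval (k i) (u i) (us i).1 rfl
    have key : ∀ m : ℕ,
        ∑ i ∈ Finset.range m, edist (f (u (i + 1))) (f (u i)) ≤
          ∑ j ∈ Finset.Ico (k 0) (k m), E (j : ZMod n) := by
      intro m
      induction m with
      | zero => simp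
      | succ m ih =>
        rw [Finset.sum_range_succ,
          ← Finset.sum_Ico_consecutive _ (hkmono (Nat.zero_le m)) (hkmono (Nat.le_succ m))]
        gcongr
        rw [hfu m, hfu (m + 1)]
        exact telescope_bound c (k (m + 1)) (k m) (hkmono (Nat.le_succ m))
    calc ∑ i ∈ Finset.range m, edist (f (u (i + 1))) (f (u i))
        ≤ ∑ j ∈ Finset.Ico (k 0) (k m), E (j : ZMod n) := key m
      _ ≤ ∑ j ∈ Finset.range n, E (j : ZMod n) := by
          refine Finset.sum_le_sum_of_subset ?_
          intro j hj
          rw [Finset.mem_Ico] at hj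
          exact Finset.mem_range.mpr (lt_of_lt_of_le hj.2 (hkle m))
      _ = ∑ i : ZMod n, E i := sum_range_zmod E
  · -- lower bound
    set u : ℕ → ℝ := fun i => min ((i : ℝ) / n) 1 with hu_def
    have hu : Monotone u := fun a b hab => by
      refine min_le_min ?_ le_rfl
      gcongr
    have us : ∀ i, u i ∈ Set.Icc (0 : ℝ) 1 :=
      fun i => ⟨le_min (by positivity) zero_le_one, min_le_right _ _⟩
    have hfu : ∀ i : ℕ, i ≤ n → f (u i) = c (i : ZMod n) := by
      intro i hi
      have h1 : (i : ℝ) / n ≤ 1 := by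
        rw [div_le_one hnpos]; exact_mod_cast hi
      have hui : u i = (i : ℝ) / n := min_eq_left h1
      refine hval i (u i) (us i).1 ?_
      rw [hui, mul_div_cancel₀ _ hn0, Nat.floor_natCast]
    have := eVariationOn.sum_le (f := f) (n := n) hu us
    refine le_trans (le_of_eq ?_) this
    rw [← sum_range_zmod E]
    refine Finset.sum_congr rfl fun i hi => ?_
    rw [Finset.mem_range] at hi
    rw [hfu i hi.le, hfu (i + 1) hi]
    simp only [hE]
    push_cast
    rfl
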